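/- Let H ∈ ℂ^{N×K}, N₀ > 0, P ∈ ℂ^{K×K} Hermitian, and set M := Hᴴ(N₀I + HHᴴ)⁻¹H − I and M̃ := P(I+M)P − P. Let F ∈ ℂ^{K×K} be invertible and T ∈ ℂ^{K×K} arbitrary, and for W ∈ ℂ^{K×N} define I_GMI(W,T,F) := log det(I+FᴴF) − Tr(FᴴF) + 2 Re Tr(Fᴴ(WH − TP)) − Tr((I+FᴴF)⁻¹ L₁), where L₁ := FᴴW(N₀I + HHᴴ)WᴴF − FᴴWHPTᴴF − FᴴTPHᴴWᴴF + FᴴTPTᴴF. Set W_opt := F^{−H}(I + FᴴF + FᴴTP)Hᴴ(N₀I + HHᴴ)⁻¹. Then for every W ∈ ℂ^{K×N}, I_GMI(W,T,F) ≤ I_GMI(W_opt,T,F), and I_GMI(W_opt,T,F) = K + log det(I+FᴴF) + Tr(TᴴF(I+FᴴF)⁻¹FᴴT M̃) + Tr(M(I+FᴴF)) + 2 Re Tr(PMFᴴT). -/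

import Mathlib

open Matrix
open scoped ComplexOrder

private lemma mul_cancel_left' {k m : ℕ} {A B : Matrix (Fin k) (Fin k) ℂ} (h : A * B = 1)
    (C : Matrix (Fin k) (Fin m) ℂ) : A * (B * C) = C := by
  rw [← Matrix.mul_assoc, h, Matrix.one_mul]

private lemma trace_re_nonneg' {n : ℕ} {A : Matrix (Fin n) (Fin n) ℂ} (hA : A.PosSemidef) :
    0 ≤ (A.trace).re := by
  open scoped MatrixOrder in
  obtain ⟨B, hB⟩ := CStarAlgebra.nonneg_iff_eq_star_mul_self.mp hA.nonneg
  rw [Matrix.star_eq_conjTranspose] at hB; subst hB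
  have h : (Bᴴ * B).trace = ∑ i, ∑ j, star (B j i) * B j i := by
    simp [Matrix.trace, Matrix.mul_apply, Matrix.diag, Matrix.conjTranspose_apply]
  rw [h, Complex.re_sum]
  refine Finset.sum_nonneg fun i _ => ?_
  rw [Complex.re_sum]
  refine Finset.sum_nonneg fun j _ => ?_
  rw [Complex.star_def, ← Complex.normSq_eq_conj_mul_self, Complex.ofReal_re]
  exact Complex.normSq_nonneg _

/-- The GMI of the Method I (Forney model) demodulator with parameters `(W, T, F)`:
`I_GMI(W,T,F) = log det(I+FᴴF) − Tr(FᴴF) + 2 Re Tr(Fᴴ(WH − TP)) − Tr((I+FᴴF)⁻¹ L₁)`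
with `L₁ = FᴴW(N₀I+HHᴴ)WᴴF − FᴴWHPTᴴF − FᴴTPHᴴWᴴF + FᴴTPTᴴF`. -/
noncomputable def IGMI1 {N K : ℕ} (H : Matrix (Fin N) (Fin K) ℂ) (N₀ : ℝ)
    (P : Matrix (Fin K) (Fin K) ℂ) (W : Matrix (Fin K) (Fin N) ℂ)
    (T F : Matrix (Fin K) (Fin K) ℂ) : ℝ :=
  (Complex.log ((1 + Fᴴ * F).det)).re - (Matrix.trace (Fᴴ * F)).re
    + 2 * (Matrix.trace (Fᴴ * (W * H - T * P))).re
    - (Matrix.trace ((1 + Fᴴ * F)⁻¹ *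
        (Fᴴ * W * ((N₀ : ℂ) • 1 + H * Hᴴ) * Wᴴ * F - Fᴴ * W * H * P * Tᴴ * F
          - Fᴴ * T * P * Hᴴ * Wᴴ * F + Fᴴ * T * P * Tᴴ * F))).re

/-- front-end-filter part of Proposition 1, Method I. The GMI is maximized
over `W` by `W_opt = F⁻ᴴ(I + FᴴF + FᴴTP)Hᴴ(N₀I+HHᴴ)⁻¹`, with the stated optimal value. -/
theorem gmi_method1_frontend {N K : ℕ} (H : Matrix (Fin N) (Fin K) ℂ)
    (N₀ : ℝ) (hN₀ : 0 < N₀)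
    (P : Matrix (Fin K) (Fin K) ℂ) (hP : P.IsHermitian)
    (M : Matrix (Fin K) (Fin K) ℂ)
    (hM : M = Hᴴ * ((N₀ : ℂ) • 1 + H * Hᴴ)⁻¹ * H - 1)
    (Mt : Matrix (Fin K) (Fin K) ℂ) (hMt : Mt = P * (1 + M) * P - P)
    (F : Matrix (Fin K) (Fin K) ℂ) (hF : IsUnit F)
    (T : Matrix (Fin K) (Fin K) ℂ)
    (Wopt : Matrix (Fin K) (Fin N) ℂ)
    (hWopt : Wopt = (Fᴴ)⁻¹ * (1 + Fᴴ * F + Fᴴ * T * P) * Hᴴ * ((N₀ : ℂ) • 1 + H * Hᴴ)⁻¹) :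
    (∀ W : Matrix (Fin K) (Fin N) ℂ, IGMI1 H N₀ P W T F ≤ IGMI1 H N₀ P Wopt T F) ∧
      IGMI1 H N₀ P Wopt T F
        = K + (Complex.log ((1 + Fᴴ * F).det)).re
          + (Matrix.trace (Tᴴ * F * (1 + Fᴴ * F)⁻¹ * Fᴴ * T * Mt)).re
          + (Matrix.trace (M * (1 + Fᴴ * F))).re
          + 2 * (Matrix.trace (P * M * Fᴴ * T)).re := by
  classical
  have hFd : IsUnit F.det := (Matrix.isUnit_iff_isUnit_det F).mp hF
  have hFl : F⁻¹ * F = 1 := Matrix.nonsing_inv_mul F hFd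
  have hFHr : Fᴴ * (Fᴴ)⁻¹ = 1 := by
    rw [← Matrix.conjTranspose_nonsing_inv, ← Matrix.conjTranspose_mul, hFl,
      Matrix.conjTranspose_one]
  set S : Matrix (Fin N) (Fin N) ℂ := (N₀ : ℂ) • 1 + H * Hᴴ with hSdef
  have hSpd : S.PosDef := by
    have h1 : ((N₀ : ℂ) • (1 : Matrix (Fin N) (Fin N) ℂ)).PosDef := by
      rw [Matrix.smul_one_eq_diagonal]
      exact Matrix.posDef_diagonal_iff.mpr fun i => Complex.zero_lt_real.mpr hN₀
    exact h1.add_posSemidef (Matrix.posSemidef_self_mul_conjTranspose H)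
  have hSH : Sᴴ = S := hSpd.isHermitian
  have hSd : IsUnit S.det := (Matrix.isUnit_iff_isUnit_det S).mp hSpd.isUnit
  have hSr : S * S⁻¹ = 1 := Matrix.mul_nonsing_inv S hSd
  have hSl : S⁻¹ * S = 1 := Matrix.nonsing_inv_mul S hSd
  have hSiH : (S⁻¹)ᴴ = S⁻¹ := hSpd.isHermitian.inv
  set G : Matrix (Fin K) (Fin K) ℂ := 1 + Fᴴ * F with hGdef
  have hGpd : G.PosDef :=
    Matrix.PosDef.add_posSemidef Matrix.PosDef.one (Matrix.posSemidef_conjTranspose_mul_self F)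
  have hGH : Gᴴ = G := hGpd.isHermitian
  have hGd : IsUnit G.det := (Matrix.isUnit_iff_isUnit_det G).mp hGpd.isUnit
  have hGr : G * G⁻¹ = 1 := Matrix.mul_nonsing_inv G hGd
  have hGl : G⁻¹ * G = 1 := Matrix.nonsing_inv_mul G hGd
  have hQpsd : (F * G⁻¹ * Fᴴ).PosSemidef :=
    (hGpd.inv.posSemidef).mul_mul_conjTranspose_same F
  -- abbreviations
  set U : Matrix (Fin K) (Fin K) ℂ := Fᴴ * (T * P) with hUdef
  set V : Matrix (Fin K) (Fin K) ℂ := P * (Tᴴ * F) with hVdef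
  have hVU : V = Uᴴ := by
    rw [hUdef, hVdef, Matrix.conjTranspose_mul, Matrix.conjTranspose_mul, hP.eq,
      Matrix.conjTranspose_conjTranspose, Matrix.mul_assoc]
  -- right-associated forms of Wopt and Woptᴴ
  have hWoptR : Wopt = (Fᴴ)⁻¹ * ((G + U) * (Hᴴ * S⁻¹)) := by
    rw [hWopt]; simp only [Matrix.mul_assoc, hUdef]
  have hWoH : Woptᴴ = S⁻¹ * (H * ((G + V) * F⁻¹)) := by
    rw [hWoptR]
    simp only [Matrix.conjTranspose_mul, Matrix.conjTranspose_add,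
      Matrix.conjTranspose_conjTranspose, Matrix.conjTranspose_nonsing_inv, hSH, hGH, hVU,
      Matrix.mul_assoc]
  -- Hᴴ S⁻¹ H = 1 + M
  have hHSH : ∀ {m : ℕ} (Z : Matrix (Fin K) (Fin m) ℂ),
      Hᴴ * (S⁻¹ * (H * Z)) = (1 + M) * Z := by
    intro m Z
    rw [← Matrix.mul_assoc, ← Matrix.mul_assoc, hM]
    congr 1
    abel
  -- the constant (in W) part of the GMI
  set c : ℝ := (Complex.log G.det).re - (Matrix.trace (Fᴴ * F)).re
      - 2 * (Matrix.trace U).re - (Matrix.trace (G⁻¹ * (Fᴴ * (T * (P * (Tᴴ * F)))))).re with hcdef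
  -- the key completion-of-squares identity
  have key : ∀ Wv : Matrix (Fin K) (Fin N) ℂ,
      IGMI1 H N₀ P Wv T F
        = c + (Matrix.trace (F * (G⁻¹ * (Fᴴ * (Wv * (S * Woptᴴ)))))
             + Matrix.trace (F * (G⁻¹ * (Fᴴ * (Wopt * (S * Wvᴴ)))))
             - Matrix.trace (F * (G⁻¹ * (Fᴴ * (Wv * (S * Wvᴴ)))))).re := by
    intro Wv
    -- eqB : cross term 1
    have eqB : Matrix.trace (F * (G⁻¹ * (Fᴴ * (Wv * (S * Woptᴴ)))))
        = Matrix.trace (Fᴴ * (Wv * H))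
          + Matrix.trace (G⁻¹ * (Fᴴ * (Wv * (H * (P * (Tᴴ * F)))))) := by
      rw [hWoH, mul_cancel_left' hSr, Matrix.trace_mul_comm]
      simp only [Matrix.mul_assoc]
      rw [hFl, Matrix.mul_one]
      simp only [Matrix.mul_add, Matrix.add_mul, Matrix.trace_add, hVdef]
      congr 1
      have h2 : G⁻¹ * (Fᴴ * (Wv * (H * G))) = (G⁻¹ * (Fᴴ * (Wv * H))) * G := by
        simp only [Matrix.mul_assoc]
      rw [h2, Matrix.trace_mul_comm, mul_cancel_left' hGr]
    -- eqC : cross term 2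
    have eqC : Matrix.trace (F * (G⁻¹ * (Fᴴ * (Wopt * (S * Wvᴴ)))))
        = Matrix.trace (Hᴴ * (Wvᴴ * F))
          + Matrix.trace (G⁻¹ * (Fᴴ * (T * (P * (Hᴴ * (Wvᴴ * F)))))) := by
      rw [hWoptR]
      simp only [Matrix.mul_assoc]
      rw [mul_cancel_left' hFHr, mul_cancel_left' hSl, Matrix.trace_mul_comm]
      simp only [Matrix.mul_add, Matrix.add_mul, Matrix.trace_add, Matrix.mul_assoc, hUdef]
      rw [mul_cancel_left' hGl]
    -- decomposition of the quadratic-form trace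
    have eqL : Matrix.trace (G⁻¹ *
          (Fᴴ * Wv * S * Wvᴴ * F - Fᴴ * Wv * H * P * Tᴴ * F
            - Fᴴ * T * P * Hᴴ * Wvᴴ * F + Fᴴ * T * P * Tᴴ * F))
        = Matrix.trace (F * (G⁻¹ * (Fᴴ * (Wv * (S * Wvᴴ)))))
          - Matrix.trace (G⁻¹ * (Fᴴ * (Wv * (H * (P * (Tᴴ * F))))))
          - Matrix.trace (G⁻¹ * (Fᴴ * (T * (P * (Hᴴ * (Wvᴴ * F))))))
          + Matrix.trace (G⁻¹ * (Fᴴ * (T * (P * (Tᴴ * F))))) := by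
      have h1 : G⁻¹ * (Fᴴ * Wv * S * Wvᴴ * F - Fᴴ * Wv * H * P * Tᴴ * F
            - Fᴴ * T * P * Hᴴ * Wvᴴ * F + Fᴴ * T * P * Tᴴ * F)
          = (G⁻¹ * (Fᴴ * (Wv * (S * Wvᴴ)))) * F
            - G⁻¹ * (Fᴴ * (Wv * (H * (P * (Tᴴ * F)))))
            - G⁻¹ * (Fᴴ * (T * (P * (Hᴴ * (Wvᴴ * F)))))
            + G⁻¹ * (Fᴴ * (T * (P * (Tᴴ * F)))) := by
        simp only [Matrix.mul_sub, Matrix.mul_add, Matrix.mul_assoc]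
      rw [h1]
      simp only [Matrix.trace_sub, Matrix.trace_add]
      rw [Matrix.trace_mul_comm]
    -- real-part bookkeeping
    have reHW : (Matrix.trace (Hᴴ * (Wvᴴ * F))).re = (Matrix.trace (Fᴴ * (Wv * H))).re := by
      have h1 : Hᴴ * (Wvᴴ * F) = (Fᴴ * (Wv * H))ᴴ := by
        simp only [Matrix.conjTranspose_mul, Matrix.conjTranspose_conjTranspose,
          Matrix.mul_assoc]
      rw [h1, Matrix.trace_conjTranspose]
      exact Complex.conj_re _
    have hsub : Fᴴ * (Wv * H - T * P) = Fᴴ * (Wv * H) - U := by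
      rw [Matrix.mul_sub, hUdef]
    show (Complex.log G.det).re - (Matrix.trace (Fᴴ * F)).re
        + 2 * (Matrix.trace (Fᴴ * (Wv * H - T * P))).re
        - (Matrix.trace (G⁻¹ * (Fᴴ * Wv * S * Wvᴴ * F - Fᴴ * Wv * H * P * Tᴴ * F
            - Fᴴ * T * P * Hᴴ * Wvᴴ * F + Fᴴ * T * P * Tᴴ * F))).re = _
    rw [hsub, Matrix.trace_sub, eqL, eqB, eqC, hcdef]
    simp only [Complex.add_re, Complex.sub_re]
    rw [reHW]
    ring
  constructor
  · -- the inequality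
    intro W
    rw [key W, key Wopt]
    have hdiff :
        Matrix.trace (F * (G⁻¹ * (Fᴴ * ((Wopt - W) * (S * (Wopt - W)ᴴ)))))
          = (Matrix.trace (F * (G⁻¹ * (Fᴴ * (Wopt * (S * Woptᴴ)))))
              + Matrix.trace (F * (G⁻¹ * (Fᴴ * (Wopt * (S * Woptᴴ)))))
              - Matrix.trace (F * (G⁻¹ * (Fᴴ * (Wopt * (S * Woptᴴ))))))
            - (Matrix.trace (F * (G⁻¹ * (Fᴴ * (W * (S * Woptᴴ)))))
              + Matrix.trace (F * (G⁻¹ * (Fᴴ * (Wopt * (S * Wᴴ)))))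
              - Matrix.trace (F * (G⁻¹ * (Fᴴ * (W * (S * Wᴴ)))))) := by
      simp only [Matrix.conjTranspose_sub, Matrix.mul_sub, Matrix.sub_mul, Matrix.trace_sub]
      ring
    have hpos : 0 ≤ (Matrix.trace (F * (G⁻¹ * (Fᴴ * ((Wopt - W) * (S * (Wopt - W)ᴴ)))))).re := by
      open scoped MatrixOrder in
      obtain ⟨R, hR⟩ := CStarAlgebra.nonneg_iff_eq_star_mul_self.mp hSpd.posSemidef.nonneg
      rw [Matrix.star_eq_conjTranspose] at hR
      set D := Wopt - W with hD
      have h1 : F * (G⁻¹ * (Fᴴ * (D * (S * Dᴴ))))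
          = (F * (G⁻¹ * (Fᴴ * (D * Rᴴ)))) * (R * Dᴴ) := by
        rw [hR]; simp only [Matrix.mul_assoc]
      have h2 : (R * Dᴴ) * (F * (G⁻¹ * (Fᴴ * (D * Rᴴ))))
          = (R * Dᴴ) * (F * G⁻¹ * Fᴴ) * (R * Dᴴ)ᴴ := by
        simp only [Matrix.conjTranspose_mul, Matrix.conjTranspose_conjTranspose,
          Matrix.mul_assoc]
      rw [h1, Matrix.trace_mul_comm, h2]
      exact trace_re_nonneg' (hQpsd.mul_mul_conjTranspose_same (R * Dᴴ))
    rw [hdiff] at hpos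
    simp only [Complex.sub_re, Complex.add_re] at hpos ⊢
    linarith
  · -- the optimal value
    rw [key Wopt]
    -- compute the quadratic form at the optimum
    have hoo : Matrix.trace (F * (G⁻¹ * (Fᴴ * (Wopt * (S * Woptᴴ)))))
        = Matrix.trace (G⁻¹ * ((G + U) * ((1 + M) * (G + V)))) := by
      rw [hWoH, mul_cancel_left' hSr, hWoptR]
      simp only [Matrix.mul_assoc]
      rw [mul_cancel_left' hFHr, hHSH, Matrix.trace_mul_comm]
      simp only [Matrix.mul_assoc]
      rw [hFl, Matrix.mul_one]
    -- expand the quadratic form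
    have hMtP : P * P + P * (M * P) = Mt + P := by
      rw [hMt]
      simp only [Matrix.add_mul, Matrix.mul_add, Matrix.one_mul, Matrix.mul_assoc]
      abel
    have hexp : Matrix.trace (G⁻¹ * ((G + U) * ((1 + M) * (G + V))))
        = Matrix.trace (1 : Matrix (Fin K) (Fin K) ℂ) + Matrix.trace (Fᴴ * F)
          + Matrix.trace V + Matrix.trace (M * G) + Matrix.trace (M * V)
          + Matrix.trace U + Matrix.trace (M * U)
          + Matrix.trace (G⁻¹ * (Fᴴ * (T * (Mt * (Tᴴ * F)))))
          + Matrix.trace (G⁻¹ * (Fᴴ * (T * (P * (Tᴴ * F))))) := by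
      have hsplit : G⁻¹ * ((G + U) * ((1 + M) * (G + V)))
          = G⁻¹ * (G * ((1 + M) * (G + V)))
            + (G⁻¹ * (U * G) + G⁻¹ * (U * (M * G)))
            + G⁻¹ * (U * V + U * (M * V)) := by
        simp only [Matrix.add_mul, Matrix.mul_add, Matrix.one_mul, Matrix.mul_assoc]
        abel
      rw [hsplit]
      simp only [Matrix.trace_add]
      rw [mul_cancel_left' hGl]
      have tG : Matrix.trace G
          = Matrix.trace (1 : Matrix (Fin K) (Fin K) ℂ) + Matrix.trace (Fᴴ * F) := by
        rw [hGdef, Matrix.trace_add]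
      have t1 : Matrix.trace ((1 + M) * (G + V))
          = Matrix.trace G + Matrix.trace V + Matrix.trace (M * G) + Matrix.trace (M * V) := by
        rw [show (1 + M) * (G + V) = G + V + (M * G + M * V) from by
          simp only [Matrix.add_mul, Matrix.mul_add, Matrix.one_mul]; abel]
        simp only [Matrix.trace_add]
        ring
      have t2 : Matrix.trace (G⁻¹ * (U * G)) = Matrix.trace U := by
        rw [show G⁻¹ * (U * G) = (G⁻¹ * U) * G from by simp only [Matrix.mul_assoc],
          Matrix.trace_mul_comm, mul_cancel_left' hGr]
      have t3 : Matrix.trace (G⁻¹ * (U * (M * G))) = Matrix.trace (M * U) := by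
        rw [show G⁻¹ * (U * (M * G)) = (G⁻¹ * (U * M)) * G from by simp only [Matrix.mul_assoc],
          Matrix.trace_mul_comm, mul_cancel_left' hGr, Matrix.trace_mul_comm]
      have t4 : Matrix.trace (G⁻¹ * (U * V + U * (M * V)))
          = Matrix.trace (G⁻¹ * (Fᴴ * (T * (Mt * (Tᴴ * F)))))
            + Matrix.trace (G⁻¹ * (Fᴴ * (T * (P * (Tᴴ * F))))) := by
        have h1 : U * V + U * (M * V) = Fᴴ * (T * ((P * P + P * (M * P)) * (Tᴴ * F))) := by
          rw [hUdef, hVdef]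
          simp only [Matrix.mul_add, Matrix.add_mul, Matrix.mul_assoc]
        rw [h1, hMtP]
        simp only [Matrix.add_mul, Matrix.mul_add, Matrix.mul_assoc, Matrix.trace_add]
      rw [t1, t2, t3, t4, tG]
      ring
    -- real-part identifications
    have rV : (Matrix.trace V).re = (Matrix.trace U).re := by
      rw [hVU, Matrix.trace_conjTranspose]; exact Complex.conj_re _
    have rMV : (Matrix.trace (M * V)).re = (Matrix.trace (M * U)).re := by
      have hMH : Mᴴ = M := by
        rw [hM]
        simp only [Matrix.conjTranspose_sub, Matrix.conjTranspose_mul, Matrix.conjTranspose_one,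
          Matrix.conjTranspose_conjTranspose, Matrix.conjTranspose_nonsing_inv, hSH,
          Matrix.mul_assoc]
      have h2 : Matrix.trace (M * V) = star (Matrix.trace (M * U)) :=
        calc Matrix.trace (M * V) = Matrix.trace (V * M) := Matrix.trace_mul_comm _ _
          _ = Matrix.trace ((M * U)ᴴ) := by rw [Matrix.conjTranspose_mul, hMH, ← hVU]
          _ = star (Matrix.trace (M * U)) := Matrix.trace_conjTranspose _
      rw [h2]
      exact Complex.conj_re _
    have rPM : (Matrix.trace (P * M * Fᴴ * T)) = Matrix.trace (M * U) := by
      have h1 : P * M * Fᴴ * T = P * (M * Fᴴ * T) := by simp only [Matrix.mul_assoc]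
      have h2 : M * Fᴴ * T * P = M * U := by rw [hUdef]; simp only [Matrix.mul_assoc]
      rw [h1, Matrix.trace_mul_comm, h2]
    have rMt : Matrix.trace (Tᴴ * F * G⁻¹ * Fᴴ * T * Mt)
        = Matrix.trace (G⁻¹ * (Fᴴ * (T * (Mt * (Tᴴ * F))))) := by
      have h1 : Tᴴ * F * G⁻¹ * Fᴴ * T * Mt = (Tᴴ * F) * (G⁻¹ * (Fᴴ * (T * Mt))) := by
        simp only [Matrix.mul_assoc]
      have h2 : G⁻¹ * (Fᴴ * (T * Mt)) * (Tᴴ * F) = G⁻¹ * (Fᴴ * (T * (Mt * (Tᴴ * F)))) := by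
        simp only [Matrix.mul_assoc]
      rw [h1, Matrix.trace_mul_comm, h2]
    have rK : (Matrix.trace (1 : Matrix (Fin K) (Fin K) ℂ)).re = K := by
      simp [Matrix.trace_one]
    have rMG : Matrix.trace (M * G) = Matrix.trace (M * G) := rfl
    rw [hoo, hexp, ← rMt, hcdef]
    simp only [Complex.add_re, Complex.sub_re]
    rw [rK, rV, rMV, rPM]
    ring
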